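/- The total number of symmetric peaks over all Dyck paths of semilength n, summed over all n with weight z^n, has generating function (5z − 1 + (1−z)√(1−4z)) / (2(1−z)√(1−4z)). -/

import Mathlib

/-- Height of the vertex after the first `j` steps of the path `w`
(`true` = up-step `u`, `false` = down-step `d`). -/
def hgt (w : List Bool) (j : ℕ) : ℤ :=
  ((w.take j).count true : ℤ) - ((w.take j).count false : ℤ)

/-- `w` is a Dyck word: equally many `u`'s and `d`'s, and every prefix
has at least as many `u`'s as `d`'s. -/
def IsDyckWord (w : List Bool) : Prop :=
  w.count true = w.count false ∧ ∀ j, 0 ≤ hgt w j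

instance : DecidablePred IsDyckWord := fun w => by
  have : IsDyckWord w ↔ (w.count true = w.count false ∧
      ∀ j ∈ List.range (w.length + 1), 0 ≤ hgt w j) := by
    constructor
    · rintro ⟨h1, h2⟩; exact ⟨h1, fun j _ => h2 j⟩
    · rintro ⟨h1, h2⟩
      refine ⟨h1, fun j => ?_⟩
      rcases le_or_gt j w.length with h | h
      · exact h2 j (List.mem_range.mpr (Nat.lt_succ_of_le h))
      · have : w.take j = w := List.take_of_length_le h.le
        have hw : hgt w j = hgt w w.length := by
          unfold hgt
          rw [this, List.take_of_length_le (le_refl _)]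
        rw [hw]
        exact h2 w.length (List.mem_range.mpr (Nat.lt_succ_of_le (le_refl _)))
  exact decidable_of_iff' _ this

/-- there is a peak (an occurrence of `ud`) at positions `i, i+1`. -/
def isPeakB (w : List Bool) (i : ℕ) : Bool :=
  w.getD i false && !(w.getD (i+1) true)

/-- there is a valley (an occurrence of `du`) at positions `i, i+1`. -/
def isValleyB (w : List Bool) (i : ℕ) : Bool :=
  !(w.getD i true) && w.getD (i+1) false

/-- length of the maximal run of `u`'s ending at position `i`. -/
def upRunL (w : List Bool) (i : ℕ) : ℕ :=
  ((List.range (i+1)).takeWhile (fun k => w.getD (i-k) false)).length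

/-- length of the maximal run of `d`'s starting at position `i`. -/
def downRunR (w : List Bool) (i : ℕ) : ℕ :=
  ((List.range (w.length - i)).takeWhile (fun k => !(w.getD (i+k) true))).length

/-- length of the maximal run of `d`'s ending at position `i`. -/
def downRunL (w : List Bool) (i : ℕ) : ℕ :=
  ((List.range (i+1)).takeWhile (fun k => !(w.getD (i-k) true))).length

/-- length of the maximal run of `u`'s starting at position `i`. -/
def upRunR (w : List Bool) (i : ℕ) : ℕ :=
  ((List.range (w.length - i)).takeWhile (fun k => w.getD (i+k) false)).length

/-- The peak at `i` is symmetric: its maximal mountain `u^a d^b` has `a = b`. -/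
def isSymPeakB (w : List Bool) (i : ℕ) : Bool :=
  isPeakB w i && (upRunL w i == downRunR w (i+1))

/-- The peak at `i` is asymmetric: its maximal mountain `u^a d^b` has `a ≠ b`. -/
def isAsymPeakB (w : List Bool) (i : ℕ) : Bool :=
  isPeakB w i && !(upRunL w i == downRunR w (i+1))

/-- weight of the peak at `i`: `min a b` for its maximal mountain `u^a d^b`. -/
def peakWeight (w : List Bool) (i : ℕ) : ℕ :=
  min (upRunL w i) (downRunR w (i+1))

/-- The valley at `i` is symmetric: the maximal `d^a u^b` containing it has `a = b`. -/
def isSymValleyB (w : List Bool) (i : ℕ) : Bool :=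
  isValleyB w i && (downRunL w i == upRunR w (i+1))

/-- weight of the valley at `i`: the largest `j` with `d^j u^j` through the valley. -/
def valleyWeight (w : List Bool) (i : ℕ) : ℕ :=
  min (downRunL w i) (upRunR w (i+1))

def peakCount (w : List Bool) : ℕ := ((List.range w.length).filter (isPeakB w)).length
def spCount (w : List Bool) : ℕ := ((List.range w.length).filter (isSymPeakB w)).length
def apCount (w : List Bool) : ℕ := ((List.range w.length).filter (isAsymPeakB w)).length
def svalCount (w : List Bool) : ℕ := ((List.range w.length).filter (isSymValleyB w)).length

/-- total weight of the symmetric peaks of `w`. -/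
def spWeight (w : List Bool) : ℕ :=
  (((List.range w.length).filter (isSymPeakB w)).map (peakWeight w)).sum

/-- total weight of the asymmetric peaks of `w`. -/
def apWeight (w : List Bool) : ℕ :=
  (((List.range w.length).filter (isAsymPeakB w)).map (peakWeight w)).sum

/-- total weight of the symmetric valleys of `w`. -/
def svWeight (w : List Bool) : ℕ :=
  (((List.range w.length).filter (isSymValleyB w)).map (valleyWeight w)).sum

/-- positions of the peaks of `w`, from left to right. -/
def peakList (w : List Bool) : List ℕ := (List.range w.length).filter (isPeakB w)

/-- positions of the valleys of `w`, from left to right. -/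
def valleyList (w : List Bool) : List ℕ := (List.range w.length).filter (isValleyB w)

/-- heights of the peaks of `w`, from left to right. -/
def peakHeights (w : List Bool) : List ℤ := (peakList w).map (fun i => hgt w (i+1))

/-- heights of the valleys of `w`, from left to right. -/
def valleyHeights (w : List Bool) : List ℤ := (valleyList w).map (fun i => hgt w (i+1))

/-- number of pairs of adjacent equal entries of a list. -/
def eqAdjCount (l : List ℤ) : ℕ :=
  ((l.zip l.tail).filter (fun p => decide (p.1 = p.2))).length

/-- `sp'`: number of pairs of consecutive valleys of `w` at the same height. -/
def spPrime (w : List Bool) : ℕ := eqAdjCount (valleyHeights w)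

/-- all Bool lists of length `m`, as a Finset. -/
def boolLists (m : ℕ) : Finset (List Bool) :=
  Finset.image (fun f : Fin m → Bool => List.ofFn f) Finset.univ

/-- The (finite) set of Dyck words of semilength `n`. -/
def dyckFinset (n : ℕ) : Finset (List Bool) :=
  (boolLists (2*n)).filter (fun w => IsDyckWord w)

lemma tw_succ (p : ℕ → Bool) (m : ℕ) :
    ((List.range (m+1)).takeWhile p).length =
      if p 0 then ((List.range m).takeWhile (fun k => p (k+1))).length + 1 else 0 := by
  rw [List.range_succ_eq_map]
  have h2 : (p ∘ Nat.succ) = fun k => p (k+1) := rfl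
  by_cases h : p 0 <;> simp [h, List.takeWhile_cons, List.takeWhile_map, h2]

lemma upRunL_zero (w : List Bool) : upRunL w 0 = if w.getD 0 false then 1 else 0 := by
  rw [upRunL, tw_succ]; simp

lemma upRunL_succ (w : List Bool) (i : ℕ) :
    upRunL w (i+1) = if w.getD (i+1) false then upRunL w i + 1 else 0 := by
  rw [upRunL, tw_succ]
  have h : (fun k => w.getD (i+1-(k+1)) false) = fun k => w.getD (i-k) false := by
    funext k; congr 1; omega
  simp only [Nat.sub_zero, h]; rfl

lemma upRunL_eq_zero (w : List Bool) (i : ℕ) (h : w.getD i false = false) :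
    upRunL w i = 0 := by
  cases i with
  | zero => rw [upRunL_zero, h]; rfl
  | succ m => rw [upRunL_succ, h]; rfl

lemma upRunL_of_true (w : List Bool) (i : ℕ) (h : w.getD (i+1) false = true) :
    upRunL w (i+1) = upRunL w i + 1 := by rw [upRunL_succ, h]; rfl

lemma upRunL_pos (w : List Bool) (i : ℕ) (h : w.getD i false = true) :
    1 ≤ upRunL w i := by
  cases i with
  | zero => rw [upRunL_zero, h]; simp
  | succ m => rw [upRunL_succ, h]; simp

lemma downRunR_rec (w : List Bool) (i : ℕ) :
    downRunR w i = if w.getD i true = false then downRunR w (i+1) + 1 else 0 := by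
  rcases le_or_gt w.length i with h | h
  · have h0 : w.getD i true = true := List.getD_eq_default _ _ h
    have h1 : w.length - i = 0 := by omega
    rw [downRunR, h1, h0]; simp
  · have h1 : w.length - i = (w.length - (i+1)) + 1 := by omega
    rw [downRunR, h1, tw_succ]
    have h2 : (fun k => !(w.getD (i+(k+1)) true)) = fun k => !(w.getD ((i+1)+k) true) := by
      funext k; congr 2; omega
    simp only [Nat.add_zero, h2]
    have h3 : ((List.range (w.length - (i+1))).takeWhile
        (fun k => !(w.getD ((i+1)+k) true))).length = downRunR w (i+1) := rfl
    rw [h3]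
    cases hb : w.getD i true <;> simp [hb]

lemma downRunR_eq_zero (w : List Bool) (i : ℕ) (h : w.getD i true = true) :
    downRunR w i = 0 := by rw [downRunR_rec, h]; simp

lemma downRunR_of_false (w : List Bool) (i : ℕ) (h : w.getD i true = false) :
    downRunR w i = downRunR w (i+1) + 1 := by rw [downRunR_rec, h]; simp

lemma downRunR_pos (w : List Bool) (i : ℕ) (h : w.getD i true = false) :
    1 ≤ downRunR w i := by rw [downRunR_of_false w i h]; omega

lemma upRunL_congr (w v : List Bool) (i : ℕ)
    (h : ∀ k, k ≤ i → w.getD k false = v.getD k false) :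
    upRunL w i = upRunL v i := by
  induction i with
  | zero => rw [upRunL_zero, upRunL_zero, h 0 le_rfl]
  | succ m ih =>
      rw [upRunL_succ, upRunL_succ, h (m+1) le_rfl,
        ih (fun k hk => h k (by omega))]

lemma downRunR_shift (w v : List Bool) (c i₀ : ℕ) (hlen : w.length = v.length + c)
    (h : ∀ k, i₀ ≤ k → w.getD (k + c) true = v.getD k true) :
    ∀ i, i₀ ≤ i → downRunR w (i + c) = downRunR v i := by
  have H : ∀ d i, i₀ ≤ i → v.length - i = d → downRunR w (i+c) = downRunR v i := by
    intro d
    induction d with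
    | zero =>
        intro i hi hd
        have h1 : downRunR v i = 0 := by
          rw [downRunR_eq_zero]; exact List.getD_eq_default _ _ (by omega)
        have h2 : downRunR w (i+c) = 0 := by
          rw [downRunR_eq_zero]; exact List.getD_eq_default _ _ (by omega)
        rw [h1, h2]
    | succ d ih =>
        intro i hi hd
        rw [downRunR_rec w (i+c), downRunR_rec v i, h i hi]
        cases hb : v.getD i true with
        | false =>
          have he : i + c + 1 = (i+1) + c := by omega
          rw [if_pos rfl, if_pos rfl, he, ih (i+1) (by omega) (by omega)]
        | true => simp
  exact fun i hi => H (v.length - i) i hi rfl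

/-! ### Insertion and deletion of a `ud` pair -/

def insUD (v : List Bool) (j : ℕ) : List Bool := v.take j ++ true :: false :: v.drop j

def delUD (w : List Bool) (i : ℕ) : List Bool := w.take i ++ w.drop (i+2)

lemma length_insUD (v : List Bool) (j : ℕ) (hj : j ≤ v.length) :
    (insUD v j).length = v.length + 2 := by
  simp [insUD]; omega

lemma getD_insUD_lt (v : List Bool) (j k : ℕ) (d : Bool) (hj : j ≤ v.length) (hk : k < j) :
    (insUD v j).getD k d = v.getD k d := by
  rw [insUD, List.getD_append _ _ _ _ (by simp; omega)]
  simp [List.getD_eq_getElem?_getD, List.getElem?_take, hk]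

lemma getD_insUD_self (v : List Bool) (j : ℕ) (d : Bool) (hj : j ≤ v.length) :
    (insUD v j).getD j d = true := by
  rw [insUD, List.getD_append_right _ _ _ _ (by simp)]
  have h : j - (v.take j).length = 0 := by simp; omega
  rw [h]; rfl

lemma getD_insUD_succ (v : List Bool) (j : ℕ) (d : Bool) (hj : j ≤ v.length) :
    (insUD v j).getD (j+1) d = false := by
  rw [insUD, List.getD_append_right _ _ _ _ (by simp)]
  have h : j + 1 - (v.take j).length = 1 := by simp; omega
  rw [h]; rfl

lemma getD_insUD_ge (v : List Bool) (j k : ℕ) (d : Bool) (hj : j ≤ v.length) (hk : j ≤ k) :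
    (insUD v j).getD (k+2) d = v.getD k d := by
  rw [insUD, List.getD_append_right _ _ _ _ (by simp; omega)]
  have h : k + 2 - (v.take j).length = (k - j) + 2 := by simp; omega
  rw [h]
  show (v.drop j).getD (k - j) d = v.getD k d
  simp [List.getD_eq_getElem?_getD, List.getElem?_drop]
  congr 2
  omega

lemma take_insUD_le (v : List Bool) (j m : ℕ) (hj : j ≤ v.length) (hm : m ≤ j) :
    (insUD v j).take m = v.take m := by
  rw [insUD, List.take_append_of_le_length (by simp; omega), List.take_take,
    min_eq_left hm]

lemma take_insUD_succ (v : List Bool) (j : ℕ) (hj : j ≤ v.length) :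
    (insUD v j).take (j+1) = v.take j ++ [true] := by
  rw [insUD, List.take_append]
  have h1 : (v.take j).length = j := by simp; omega
  have h2 : j + 1 - (v.take j).length = 1 := by simp; omega
  rw [h2, List.take_of_length_le (by omega)]
  rfl

lemma take_insUD_ge (v : List Bool) (j m : ℕ) (hj : j ≤ v.length) (hm : j + 2 ≤ m) :
    (insUD v j).take m = v.take j ++ true :: false :: (v.drop j).take (m - j - 2) := by
  rw [insUD, List.take_append]
  have h1 : (v.take j).length = j := by simp; omega
  rw [h1, List.take_of_length_le (by rw [h1]; omega)]
  congr 1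
  have h2 : m - j = (m - j - 2) + 2 := by omega
  rw [h2]
  rfl

lemma hgt_insUD_le (v : List Bool) (j m : ℕ) (hj : j ≤ v.length) (hm : m ≤ j) :
    hgt (insUD v j) m = hgt v m := by
  unfold hgt; rw [take_insUD_le v j m hj hm]

lemma hgt_insUD_succ (v : List Bool) (j : ℕ) (hj : j ≤ v.length) :
    hgt (insUD v j) (j+1) = hgt v j + 1 := by
  unfold hgt; rw [take_insUD_succ v j hj]
  simp [List.count_append]
  push_cast
  ring

lemma hgt_insUD_ge (v : List Bool) (j m : ℕ) (hj : j ≤ v.length) (hm : j + 2 ≤ m) :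
    hgt (insUD v j) m = hgt v (m-2) := by
  unfold hgt
  rw [take_insUD_ge v j m hj hm]
  have h2 : v.take (m-2) = v.take j ++ (v.drop j).take (m - 2 - j) := by
    have h3 : m - 2 = j + (m - 2 - j) := by omega
    rw [h3, List.take_add]
    congr 2
    omega
  rw [h2]
  have h4 : m - j - 2 = m - 2 - j := by omega
  simp [List.count_append, List.count_cons, h4]
  push_cast
  ring

lemma count_insUD_true (v : List Bool) (j : ℕ) :
    (insUD v j).count true = v.count true + 1 := by
  have h : v.count true = (v.take j).count true + (v.drop j).count true := by
    conv_lhs => rw [← List.take_append_drop j v]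
    rw [List.count_append]
  rw [insUD, List.count_append, List.count_cons, List.count_cons, h]
  simp
  omega

lemma count_insUD_false (v : List Bool) (j : ℕ) :
    (insUD v j).count false = v.count false + 1 := by
  have h : v.count false = (v.take j).count false + (v.drop j).count false := by
    conv_lhs => rw [← List.take_append_drop j v]
    rw [List.count_append]
  rw [insUD, List.count_append, List.count_cons, List.count_cons, h]
  simp
  omega

lemma mem_boolLists (w : List Bool) (m : ℕ) : w ∈ boolLists m ↔ w.length = m := by
  constructor
  · intro h
    obtain ⟨f, -, rfl⟩ := Finset.mem_image.mp h
    simp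
  · intro h
    subst h
    exact Finset.mem_image.mpr ⟨w.get, Finset.mem_univ _, List.ofFn_get w⟩

lemma mem_dyckFinset (w : List Bool) (n : ℕ) :
    w ∈ dyckFinset n ↔ w.length = 2*n ∧ IsDyckWord w := by
  rw [dyckFinset, Finset.mem_filter, mem_boolLists]

lemma insUD_mem_dyckFinset (v : List Bool) (j n : ℕ) (hv : v ∈ dyckFinset n)
    (hj : j ≤ v.length) : insUD v j ∈ dyckFinset (n+1) := by
  rw [mem_dyckFinset] at hv ⊢
  obtain ⟨hlen, hdy⟩ := hv
  have hcnt := hdy.1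
  have hpre := hdy.2
  refine ⟨by rw [length_insUD v j hj]; omega, ?_, ?_⟩
  · rw [count_insUD_true, count_insUD_false, hcnt]
  · intro m
    rcases le_or_gt m j with hm | hm
    · rw [hgt_insUD_le v j m hj hm]; exact hpre m
    · rcases eq_or_lt_of_le (Nat.succ_le_of_lt hm) with hm2 | hm2
      · rw [← hm2, hgt_insUD_succ v j hj]
        have := hpre j
        omega
      · rw [hgt_insUD_ge v j m hj (by omega)]
        exact hpre (m-2)

/-! ### Deletion lemmas -/

lemma lt_length_of_getD_false (w : List Bool) (i : ℕ) (h : w.getD i true = false) :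
    i < w.length := by
  by_contra hc
  rw [List.getD_eq_default _ _ (by omega)] at h
  exact absurd h (by simp)

lemma lt_length_of_getD_true (w : List Bool) (i : ℕ) (h : w.getD i false = true) :
    i < w.length := by
  by_contra hc
  rw [List.getD_eq_default _ _ (by omega)] at h
  exact absurd h (by simp)

lemma delUD_insUD (v : List Bool) (j : ℕ) (hj : j ≤ v.length) :
    delUD (insUD v j) j = v := by
  have h1 : (insUD v j).take j = v.take j := take_insUD_le v j j hj le_rfl
  have h2 : (insUD v j).drop (j+2) = v.drop j := by
    have h3 : insUD v j = (v.take j ++ [true, false]) ++ v.drop j := by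
      simp [insUD]
    have h4 : (v.take j ++ [true, false]).length = j + 2 := by simp; omega
    rw [h3, List.drop_left' h4]
  rw [delUD, h1, h2, List.take_append_drop]

lemma insUD_delUD (w : List Bool) (i : ℕ) (h1 : w.getD i false = true)
    (h2 : w.getD (i+1) true = false) : insUD (delUD w i) i = w := by
  have hi1 : i + 1 < w.length := lt_length_of_getD_false w (i+1) h2
  have hlt : (w.take i).length = i := by simp; omega
  have ht : (delUD w i).take i = w.take i := by
    rw [delUD, List.take_append_of_le_length (by omega), List.take_take, min_self]
  have hd : (delUD w i).drop i = w.drop (i+2) := by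
    rw [delUD, List.drop_left' hlt]
  rw [insUD, ht, hd]
  have hw1 : w[i] = true := by rw [← List.getD_eq_getElem w false (by omega)]; exact h1
  have hw2 : w[i+1] = false := by rw [← List.getD_eq_getElem w true hi1]; exact h2
  have hdrop : w.drop i = true :: false :: w.drop (i+2) := by
    rw [List.drop_eq_getElem_cons (by omega), hw1]
    congr 1
    rw [List.drop_eq_getElem_cons hi1, hw2]
  rw [← hdrop, List.take_append_drop]

lemma delUD_mem_dyckFinset (w : List Bool) (i n : ℕ) (hw : w ∈ dyckFinset (n+1))
    (h1 : w.getD i false = true) (h2 : w.getD (i+1) true = false) :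
    delUD w i ∈ dyckFinset n := by
  have hi1 : i + 1 < w.length := lt_length_of_getD_false w (i+1) h2
  rw [mem_dyckFinset] at hw
  obtain ⟨hlen, hdy⟩ := hw
  have hcnt := hdy.1
  have hpre := hdy.2
  set v := delUD w i with hv
  have hvlen : v.length = 2*n := by rw [hv, delUD]; simp; omega
  have hins : insUD v i = w := insUD_delUD w i h1 h2
  have hiv : i ≤ v.length := by omega
  rw [mem_dyckFinset]
  refine ⟨hvlen, ?_, ?_⟩
  · have hct : w.count true = v.count true + 1 := by rw [← hins]; exact count_insUD_true v i
    have hcf : w.count false = v.count false + 1 := by rw [← hins]; exact count_insUD_false v i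
    omega
  · intro m
    rcases le_or_gt m i with hm | hm
    · have := hgt_insUD_le v i m hiv hm
      rw [hins] at this
      rw [← this]
      exact hpre m
    · have := hgt_insUD_ge v i (m+2) hiv (by omega)
      rw [hins] at this
      simp only [Nat.add_sub_cancel] at this
      rw [← this]
      exact hpre (m+2)

/-! ### Counting lemmas -/

lemma filter_range_card (p : ℕ → Bool) :
    ∀ m, ((Finset.range m).filter (fun i => p i = true)).card = ((List.range m).filter p).length := by
  intro m
  induction m with
  | zero => simp
  | succ m ih =>
      rw [List.range_succ, List.filter_append, Finset.range_add_one, Finset.filter_insert]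
      cases hp : p m with
      | true =>
          rw [if_pos rfl, Finset.card_insert_of_notMem (by simp)]
          simp [hp, ih]
      | false => simp [hp, ih]

lemma count_true_add_count_false (w : List Bool) : w.count true + w.count false = w.length := by
  induction w with
  | nil => rfl
  | cons b t ih => cases b <;> simp [List.count_cons] <;> omega

lemma card_filter_getD_true : ∀ (w : List Bool),
    ((Finset.range w.length).filter (fun i => w.getD i false = true)).card = w.count true := by
  intro w
  induction w with
  | nil => simp
  | cons b t ih =>
      rw [Finset.card_filter, List.length_cons, Finset.sum_range_succ']
      simp only [List.getD_cons_succ, List.getD_cons_zero]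
      rw [Finset.card_filter] at ih
      rw [ih]
      cases b <;> simp [List.count_cons]

lemma card_filter_getD_false : ∀ (w : List Bool),
    ((Finset.range w.length).filter (fun i => w.getD i true = false)).card = w.count false := by
  intro w
  induction w with
  | nil => simp
  | cons b t ih =>
      rw [Finset.card_filter, List.length_cons, Finset.sum_range_succ']
      simp only [List.getD_cons_succ, List.getD_cons_zero]
      rw [Finset.card_filter] at ih
      rw [ih]
      cases b <;> simp [List.count_cons]

/-! ### Marked positions -/

def MKpred (w : List Bool) (j : ℕ) : Prop :=
  ¬(1 ≤ j ∧ w.getD (j-1) false = true) ∧ w.getD j true = true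

instance : ∀ w j, Decidable (MKpred w j) := fun w j => by unfold MKpred; infer_instance

lemma isPeakB_iff (w : List Bool) (i : ℕ) :
    isPeakB w i = true ↔ w.getD i false = true ∧ w.getD (i+1) true = false := by
  simp [isPeakB, Bool.not_eq_true']

lemma isSymPeakB_iff (w : List Bool) (i : ℕ) :
    isSymPeakB w i = true ↔
      (w.getD i false = true ∧ w.getD (i+1) true = false) ∧
        upRunL w i = downRunR w (i+1) := by
  simp [isSymPeakB, isPeakB_iff, beq_iff_eq]

lemma marked_card (w : List Bool) (n : ℕ) (hw : w ∈ dyckFinset n) :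
    ((Finset.range (2*n+1)).filter (fun j => MKpred w j)).card
      = ((Finset.range (2*n)).filter (fun i => isPeakB w i = true)).card + 1 := by
  rw [mem_dyckFinset] at hw
  obtain ⟨hlen, hdy⟩ := hw
  have hcnt := hdy.1
  have htot := count_true_add_count_false w
  set L := 2*n with hL
  -- the three auxiliary sets
  set A := (Finset.range (L+1)).filter (fun j => 1 ≤ j ∧ w.getD (j-1) false = true) with hA
  set B := (Finset.range (L+1)).filter (fun j => w.getD j true = false) with hB
  have hcardA : A.card = w.count true := by
    rw [← card_filter_getD_true w, hlen]
    apply Finset.card_bij' (i := fun j _ => j - 1) (j := fun i _ => i + 1)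
    case hi =>
      intro a ha
      rw [hA, Finset.mem_filter, Finset.mem_range] at ha
      rw [Finset.mem_filter, Finset.mem_range]
      refine ⟨by omega, ?_⟩
      exact ha.2.2
    case hj =>
      intro a ha
      rw [Finset.mem_filter, Finset.mem_range] at ha
      rw [hA, Finset.mem_filter, Finset.mem_range]
      refine ⟨by omega, by omega, ?_⟩
      simpa using ha.2
    case left_inv =>
      intro a ha
      rw [hA, Finset.mem_filter, Finset.mem_range] at ha
      omega
    case right_inv =>
      intro a ha
      omega
  have hcardB : B.card = w.count false := by
    rw [← card_filter_getD_false w, hlen]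
    congr 1
    rw [hB]
    apply Finset.ext
    intro j
    rw [Finset.mem_filter, Finset.mem_filter, Finset.mem_range, Finset.mem_range]
    constructor
    · rintro ⟨hj, hg⟩
      refine ⟨?_, hg⟩
      rcases Nat.lt_or_ge j L with h | h
      · exact h
      · exfalso
        rw [List.getD_eq_default _ _ (by omega)] at hg
        exact absurd hg (by simp)
    · rintro ⟨hj, hg⟩
      exact ⟨by omega, hg⟩
  have hcardAB : (A ∩ B).card = ((Finset.range L).filter (fun i => isPeakB w i = true)).card := by
    apply Finset.card_bij' (i := fun j _ => j - 1) (j := fun i _ => i + 1)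
    case hi =>
      intro a ha
      rw [Finset.mem_inter, hA, hB, Finset.mem_filter, Finset.mem_filter, Finset.mem_range] at ha
      obtain ⟨⟨har, h1, h2⟩, -, h3⟩ := ha
      rw [Finset.mem_filter, Finset.mem_range, isPeakB_iff]
      have he : a - 1 + 1 = a := by omega
      rw [he]
      refine ⟨?_, h2, h3⟩
      have := lt_length_of_getD_false w a h3
      omega
    case hj =>
      intro a ha
      rw [Finset.mem_filter, Finset.mem_range, isPeakB_iff] at ha
      obtain ⟨har, h1, h2⟩ := ha
      rw [Finset.mem_inter, hA, hB, Finset.mem_filter, Finset.mem_filter, Finset.mem_range]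
      refine ⟨⟨by omega, by omega, by simpa using h1⟩, by omega, h2⟩
    case left_inv =>
      intro a ha
      rw [Finset.mem_inter, hA, Finset.mem_filter, Finset.mem_range] at ha
      obtain ⟨⟨h1, h2, h3⟩, h4⟩ := ha
      omega
    case right_inv =>
      intro a ha
      omega
  -- inclusion-exclusion
  have hMK : (Finset.range (L+1)).filter (fun j => MKpred w j)
      = Finset.range (L+1) \ ((Finset.range (L+1)).filter
          (fun j => (1 ≤ j ∧ w.getD (j-1) false = true) ∨ w.getD j true = false)) := by
    rw [← Finset.filter_not]
    apply Finset.filter_congr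
    intro j _
    unfold MKpred
    constructor
    · rintro ⟨hna, hb⟩
      rintro (h | h)
      · exact hna h
      · simp only [List.getD_eq_getElem?_getD] at hb
        simp [hb] at h
    · intro h
      push_neg at h
      exact ⟨fun hc => h.1 hc.1 hc.2, by simpa using h.2⟩
  have hunion : ((Finset.range (L+1)).filter
      (fun j => (1 ≤ j ∧ w.getD (j-1) false = true) ∨ w.getD j true = false)) = A ∪ B := by
    rw [hA, hB, ← Finset.filter_or]
  have hsub : A ∪ B ⊆ Finset.range (L+1) := by
    rw [hA, hB, ← Finset.filter_or]
    exact Finset.filter_subset _ _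
  have hie := Finset.card_union_add_card_inter A B
  have hcard_sdiff : (Finset.range (L+1) \ (A ∪ B)).card
      = (L+1) - (A ∪ B).card := by
    rw [Finset.card_sdiff_of_subset hsub, Finset.card_range]
  have hle : (A ∪ B).card ≤ L + 1 := by
    calc (A ∪ B).card ≤ (Finset.range (L+1)).card := Finset.card_le_card hsub
    _ = L + 1 := Finset.card_range _
  rw [hMK, hunion, hcard_sdiff]
  omega

/-! ### Runs after insertion -/

lemma upRunL_insUD (v : List Bool) (j : ℕ) (hj : j ≤ v.length) :
    upRunL (insUD v j) j = (if 1 ≤ j then upRunL v (j-1) else 0) + 1 := by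
  cases j with
  | zero =>
      rw [upRunL_zero, getD_insUD_self v 0 false hj]
      simp
  | succ m =>
      rw [upRunL_succ, getD_insUD_self v (m+1) false hj, if_pos rfl]
      have hc : upRunL (insUD v (m+1)) m = upRunL v m := by
        apply upRunL_congr
        intro k hk
        exact getD_insUD_lt v (m+1) k false hj (by omega)
      rw [hc, if_pos (by omega : 1 ≤ m+1)]
      simp only [Nat.add_sub_cancel]

lemma downRunR_insUD (v : List Bool) (j : ℕ) (hj : j ≤ v.length) :
    downRunR (insUD v j) (j+1) = downRunR v j + 1 := by
  rw [downRunR_of_false _ _ (getD_insUD_succ v j true hj)]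
  congr 1
  have := downRunR_shift (insUD v j) v 2 j (length_insUD v j hj)
    (fun k hk => getD_insUD_ge v j k true hj hk) j le_rfl
  exact this

/-! ### Pair sets -/

def SPset (n : ℕ) : Finset (List Bool × ℕ) :=
  (dyckFinset n ×ˢ Finset.range (2*n)).filter (fun q => isSymPeakB q.1 q.2 = true)

def PKset (n : ℕ) : Finset (List Bool × ℕ) :=
  (dyckFinset n ×ˢ Finset.range (2*n)).filter (fun q => isPeakB q.1 q.2 = true)

def MKset (n : ℕ) : Finset (List Bool × ℕ) :=
  (dyckFinset n ×ˢ Finset.range (2*n+1)).filter (fun q => MKpred q.1 q.2)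

lemma mem_SPset (q : List Bool × ℕ) (n : ℕ) :
    q ∈ SPset n ↔ q.1 ∈ dyckFinset n ∧ q.2 < 2*n ∧ isSymPeakB q.1 q.2 = true := by
  rw [SPset, Finset.mem_filter, Finset.mem_product, Finset.mem_range, and_assoc]

lemma mem_PKset (q : List Bool × ℕ) (n : ℕ) :
    q ∈ PKset n ↔ q.1 ∈ dyckFinset n ∧ q.2 < 2*n ∧ isPeakB q.1 q.2 = true := by
  rw [PKset, Finset.mem_filter, Finset.mem_product, Finset.mem_range, and_assoc]

lemma mem_MKset (q : List Bool × ℕ) (n : ℕ) :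
    q ∈ MKset n ↔ q.1 ∈ dyckFinset n ∧ q.2 < 2*n+1 ∧ MKpred q.1 q.2 := by
  rw [MKset, Finset.mem_filter, Finset.mem_product, Finset.mem_range, and_assoc]

lemma card_filter_product {α : Type*} (s : Finset α) (m : ℕ) (P : α × ℕ → Prop)
    [DecidablePred P] :
    ((s ×ˢ Finset.range m).filter P).card
      = ∑ w ∈ s, ((Finset.range m).filter (fun i => P (w, i))).card := by
  rw [Finset.card_filter, Finset.sum_product]
  exact Finset.sum_congr rfl (fun w _ => (Finset.card_filter _ _).symm)

lemma sum_spCount (n : ℕ) : ∑ w ∈ dyckFinset n, spCount w = (SPset n).card := by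
  rw [SPset, card_filter_product]
  refine Finset.sum_congr rfl (fun w hw => ?_)
  have hlen : w.length = 2*n := ((mem_dyckFinset w n).mp hw).1
  rw [spCount, ← hlen]
  exact (filter_range_card (isSymPeakB w) w.length).symm

lemma MKset_card (n : ℕ) : (MKset n).card = (PKset n).card + (dyckFinset n).card := by
  rw [MKset, PKset, card_filter_product, card_filter_product,
    Finset.card_eq_sum_ones (dyckFinset n), ← Finset.sum_add_distrib]
  exact Finset.sum_congr rfl (fun w hw => marked_card w n hw)

/-! ### Insertion lemmas for the pair sets -/

lemma ins_marked_SP (v : List Bool) (n j : ℕ) (hv : v ∈ dyckFinset n) (hj : j ≤ 2*n)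
    (hm : MKpred v j) : (insUD v j, j) ∈ SPset (n+1) := by
  have hlen : v.length = 2*n := ((mem_dyckFinset v n).mp hv).1
  have hjv : j ≤ v.length := by omega
  rw [mem_SPset]
  refine ⟨insUD_mem_dyckFinset v j n hv hjv, by omega, ?_⟩
  rw [isSymPeakB_iff]
  refine ⟨⟨getD_insUD_self v j false hjv, getD_insUD_succ v j true hjv⟩, ?_⟩
  rw [upRunL_insUD v j hjv, downRunR_insUD v j hjv]
  obtain ⟨hna, hb⟩ := hm
  have h1 : (if 1 ≤ j then upRunL v (j-1) else 0) = 0 := by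
    rcases Nat.eq_zero_or_pos j with h0 | h0
    · simp [h0]
    · rw [if_pos (by omega : 1 ≤ j)]
      apply upRunL_eq_zero
      cases hg : v.getD (j-1) false
      · rfl
      · exact absurd ⟨by omega, hg⟩ hna
  rw [h1, downRunR_eq_zero v j hb]

lemma ins_sym_SP (v : List Bool) (n p : ℕ) (hv : v ∈ dyckFinset n) (hp : p < 2*n)
    (hs : isSymPeakB v p = true) : (insUD v (p+1), p+1) ∈ SPset (n+1) := by
  have hlen : v.length = 2*n := ((mem_dyckFinset v n).mp hv).1
  rw [isSymPeakB_iff] at hs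
  obtain ⟨⟨hu, hd⟩, he⟩ := hs
  have hp1 : p + 1 < v.length := lt_length_of_getD_false v (p+1) hd
  have hjv : p + 1 ≤ v.length := le_of_lt hp1
  rw [mem_SPset]
  refine ⟨insUD_mem_dyckFinset v (p+1) n hv hjv, by omega, ?_⟩
  rw [isSymPeakB_iff]
  refine ⟨⟨getD_insUD_self v (p+1) false hjv, getD_insUD_succ v (p+1) true hjv⟩, ?_⟩
  rw [upRunL_insUD v (p+1) hjv, downRunR_insUD v (p+1) hjv, if_pos (by omega)]
  simp only [Nat.add_sub_cancel]
  rw [he]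

/-! ### Deletion lemma for symmetric peaks -/

lemma del_case (w : List Bool) (n i : ℕ) (hw : w ∈ dyckFinset (n+1))
    (hs : isSymPeakB w i = true) :
    (1 ≤ i ∧ w.getD (i-1) false = true → (delUD w i, i-1) ∈ SPset n)
    ∧ (¬(1 ≤ i ∧ w.getD (i-1) false = true) → (delUD w i, i) ∈ MKset n) := by
  have hlen : w.length = 2*(n+1) := ((mem_dyckFinset w (n+1)).mp hw).1
  rw [isSymPeakB_iff] at hs
  obtain ⟨⟨hu, hd⟩, he⟩ := hs
  have hi1 : i + 1 < w.length := lt_length_of_getD_false w (i+1) hd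
  set v := delUD w i with hv
  have hvd : v ∈ dyckFinset n := delUD_mem_dyckFinset w i n hw hu hd
  have hvlen : v.length = 2*n := ((mem_dyckFinset v n).mp hvd).1
  have hins : insUD v i = w := insUD_delUD w i hu hd
  have hiv : i ≤ v.length := by omega
  have hup : upRunL w i = (if 1 ≤ i then upRunL v (i-1) else 0) + 1 := by
    have := upRunL_insUD v i hiv
    rw [hins] at this
    exact this
  have hdn : downRunR w (i+1) = downRunR v i + 1 := by
    have := downRunR_insUD v i hiv
    rw [hins] at this
    exact this
  have hkey : (if 1 ≤ i then upRunL v (i-1) else 0) = downRunR v i := by omega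
  have hgd : ∀ (hne : 1 ≤ i), w.getD (i-1) false = v.getD (i-1) false := by
    intro hne
    have := getD_insUD_lt v i (i-1) false hiv (by omega)
    rw [hins] at this
    exact this
  constructor
  · rintro ⟨h1, h2⟩
    have h2v : v.getD (i-1) false = true := by rw [← hgd h1]; exact h2
    have hpos : 1 ≤ upRunL v (i-1) := upRunL_pos v (i-1) h2v
    have hdpos : 1 ≤ downRunR v i := by
      rw [← hkey, if_pos h1]
      exact hpos
    have hgvi : v.getD i true = false := by
      cases hg : v.getD i true
      · rfl
      · rw [downRunR_eq_zero v i hg] at hdpos; omega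
    have hilt : i < v.length := lt_length_of_getD_false v i hgvi
    rw [mem_SPset]
    refine ⟨hvd, by omega, ?_⟩
    rw [isSymPeakB_iff]
    have hi1e : i - 1 + 1 = i := by omega
    rw [hi1e]
    refine ⟨⟨h2v, hgvi⟩, ?_⟩
    have := hkey
    rw [if_pos h1] at this
    exact this
  · intro hna
    have hz : (if 1 ≤ i then upRunL v (i-1) else 0) = 0 := by
      rcases Nat.eq_zero_or_pos i with h0 | h0
      · simp [h0]
      · rw [if_pos (by omega : 1 ≤ i)]
        apply upRunL_eq_zero
        cases hg : v.getD (i-1) false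
        · rfl
        · exact absurd ⟨by omega, by rw [hgd (by omega)]; exact hg⟩ hna
    have hd0 : downRunR v i = 0 := by omega
    have hgvt : v.getD i true = true := by
      cases hg : v.getD i true
      · have := downRunR_pos v i hg
        omega
      · rfl
    rw [mem_MKset]
    refine ⟨hvd, by omega, ?_, hgvt⟩
    rintro ⟨h1, h2⟩
    exact hna ⟨h1, by rw [hgd h1]; exact h2⟩

/-! ### The two bijections -/

lemma SPset_card_succ (n : ℕ) : (SPset (n+1)).card = (SPset n).card + (MKset n).card := by
  rw [← Finset.card_disjSum]
  symm
  apply Finset.card_bij'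
    (i := fun a _ => Sum.elim (fun q => (insUD q.1 (q.2+1), q.2+1))
        (fun q => (insUD q.1 q.2, q.2)) a)
    (j := fun b _ => if 1 ≤ b.2 ∧ b.1.getD (b.2-1) false = true
        then Sum.inl (delUD b.1 b.2, b.2 - 1) else Sum.inr (delUD b.1 b.2, b.2))
  case hi =>
    intro a ha
    rcases Finset.mem_disjSum.mp ha with ⟨q, hq, rfl⟩ | ⟨q, hq, rfl⟩
    · rw [mem_SPset] at hq
      exact ins_sym_SP q.1 n q.2 hq.1 hq.2.1 hq.2.2
    · rw [mem_MKset] at hq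
      exact ins_marked_SP q.1 n q.2 hq.1 (by omega) hq.2.2
  case hj =>
    intro b hb
    rw [mem_SPset] at hb
    obtain ⟨hw, hi2, hs⟩ := hb
    by_cases hc : 1 ≤ b.2 ∧ b.1.getD (b.2-1) false = true
    · rw [if_pos hc]
      exact Finset.inl_mem_disjSum.mpr ((del_case b.1 n b.2 hw hs).1 hc)
    · rw [if_neg hc]
      exact Finset.inr_mem_disjSum.mpr ((del_case b.1 n b.2 hw hs).2 hc)
  case left_inv =>
    intro a ha
    rcases Finset.mem_disjSum.mp ha with ⟨q, hq, rfl⟩ | ⟨q, hq, rfl⟩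
    · rw [mem_SPset] at hq
      obtain ⟨hv, hp, hs⟩ := hq
      have hlen : q.1.length = 2*n := ((mem_dyckFinset q.1 n).mp hv).1
      rw [isSymPeakB_iff] at hs
      obtain ⟨⟨hu, hd⟩, -⟩ := hs
      have hp1 : q.2 + 1 ≤ q.1.length := le_of_lt (lt_length_of_getD_false q.1 (q.2+1) hd)
      have hcond : 1 ≤ q.2+1 ∧ (insUD q.1 (q.2+1)).getD (q.2+1-1) false = true := by
        refine ⟨by omega, ?_⟩
        simp only [Nat.add_sub_cancel]
        rw [getD_insUD_lt q.1 (q.2+1) q.2 false hp1 (by omega)]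
        exact hu
      simp only [Sum.elim_inl]
      refine (if_pos hcond).trans ?_
      rw [delUD_insUD q.1 (q.2+1) hp1]
      simp
    · rw [mem_MKset] at hq
      obtain ⟨hv, hj2, hna, hb⟩ := hq
      have hlen : q.1.length = 2*n := ((mem_dyckFinset q.1 n).mp hv).1
      have hjv : q.2 ≤ q.1.length := by omega
      have hcond : ¬(1 ≤ q.2 ∧ (insUD q.1 q.2).getD (q.2-1) false = true) := by
        rintro ⟨h1, h2⟩
        rw [getD_insUD_lt q.1 q.2 (q.2-1) false hjv (by omega)] at h2
        exact hna ⟨h1, h2⟩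
      simp only [Sum.elim_inr]
      refine (if_neg hcond).trans ?_
      rw [delUD_insUD q.1 q.2 hjv]
  case right_inv =>
    intro b hb
    rw [mem_SPset] at hb
    obtain ⟨hw, hi2, hs⟩ := hb
    rw [isSymPeakB_iff] at hs
    obtain ⟨⟨hu, hd⟩, -⟩ := hs
    have hins : insUD (delUD b.1 b.2) b.2 = b.1 := insUD_delUD b.1 b.2 hu hd
    by_cases hc : 1 ≤ b.2 ∧ b.1.getD (b.2-1) false = true
    · rw [if_pos hc]
      simp only [Sum.elim_inl]
      have he : b.2 - 1 + 1 = b.2 := by omega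
      rw [he, hins]
    · rw [if_neg hc]
      simp only [Sum.elim_inr]
      rw [hins]

lemma PKset_card_succ (n : ℕ) :
    (PKset (n+1)).card = (dyckFinset n).card * (2*n+1) := by
  rw [← Finset.card_range (2*n+1), ← Finset.card_product]
  symm
  apply Finset.card_bij'
    (i := fun q _ => (insUD q.1 q.2, q.2))
    (j := fun b _ => (delUD b.1 b.2, b.2))
  case hi =>
    intro q hq
    rw [Finset.mem_product, Finset.mem_range] at hq
    obtain ⟨hv, hj⟩ := hq
    have hlen : q.1.length = 2*n := ((mem_dyckFinset q.1 n).mp hv).1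
    have hjv : q.2 ≤ q.1.length := by omega
    rw [mem_PKset]
    refine ⟨insUD_mem_dyckFinset q.1 q.2 n hv hjv, by omega, ?_⟩
    rw [isPeakB_iff]
    exact ⟨getD_insUD_self q.1 q.2 false hjv, getD_insUD_succ q.1 q.2 true hjv⟩
  case hj =>
    intro b hb
    rw [mem_PKset] at hb
    obtain ⟨hw, hi2, hpk⟩ := hb
    rw [isPeakB_iff] at hpk
    obtain ⟨hu, hd⟩ := hpk
    have hlen : b.1.length = 2*(n+1) := ((mem_dyckFinset b.1 (n+1)).mp hw).1
    have hi1 : b.2 + 1 < b.1.length := lt_length_of_getD_false b.1 (b.2+1) hd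
    rw [Finset.mem_product, Finset.mem_range]
    exact ⟨delUD_mem_dyckFinset b.1 b.2 n hw hu hd, by omega⟩
  case left_inv =>
    intro q hq
    rw [Finset.mem_product, Finset.mem_range] at hq
    obtain ⟨hv, hj⟩ := hq
    have hlen : q.1.length = 2*n := ((mem_dyckFinset q.1 n).mp hv).1
    rw [delUD_insUD q.1 q.2 (by omega)]
  case right_inv =>
    intro b hb
    rw [mem_PKset] at hb
    obtain ⟨hw, hi2, hpk⟩ := hb
    rw [isPeakB_iff] at hpk
    rw [insUD_delUD b.1 b.2 hpk.1 hpk.2]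

lemma SPset_zero : (SPset 0).card = 0 := by
  rw [SPset]
  simp

lemma PKset_zero : (PKset 0).card = 0 := by
  rw [PKset]
  simp

/-! ### Cardinality of `dyckFinset` -/

def toStep : Bool → DyckStep := fun b => bif b then DyckStep.U else DyckStep.D

def fromStep : DyckStep → Bool := fun s => match s with
  | DyckStep.U => true
  | DyckStep.D => false

lemma toStep_inj : Function.Injective toStep := by decide

lemma fromStep_toStep : ∀ b, fromStep (toStep b) = b := by decide

lemma toStep_fromStep : ∀ s, toStep (fromStep s) = s := fun s => by cases s <;> rfl

lemma count_map_toStep_U (w : List Bool) :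
    (w.map toStep).count DyckStep.U = w.count true :=
  List.count_map_of_injective w toStep toStep_inj true

lemma count_map_toStep_D (w : List Bool) :
    (w.map toStep).count DyckStep.D = w.count false :=
  List.count_map_of_injective w toStep toStep_inj false

lemma count_map_fromStep_true (l : List DyckStep) :
    (l.map fromStep).count true = l.count DyckStep.U := by
  have h : l = (l.map fromStep).map toStep := by
    rw [List.map_map]
    have : (toStep ∘ fromStep) = id := funext toStep_fromStep
    rw [this, List.map_id]
  conv_rhs => rw [h]
  rw [count_map_toStep_U]

lemma count_map_fromStep_false (l : List DyckStep) :
    (l.map fromStep).count false = l.count DyckStep.D := by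
  have h : l = (l.map fromStep).map toStep := by
    rw [List.map_map]
    have : (toStep ∘ fromStep) = id := funext toStep_fromStep
    rw [this, List.map_id]
  conv_rhs => rw [h]
  rw [count_map_toStep_D]

def listToDW (w : List Bool) (n : ℕ) (hw : w ∈ dyckFinset n) : DyckWord where
  toList := w.map toStep
  count_U_eq_count_D := by
    have hdy := ((mem_dyckFinset w n).mp hw).2
    rw [count_map_toStep_U, count_map_toStep_D, hdy.1]
  count_D_le_count_U := by
    intro i
    have hdy := ((mem_dyckFinset w n).mp hw).2
    rw [← List.map_take, count_map_toStep_U, count_map_toStep_D]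
    have := hdy.2 i
    unfold hgt at this
    omega

lemma listToDW_semilength (w : List Bool) (n : ℕ) (hw : w ∈ dyckFinset n) :
    (listToDW w n hw).semilength = n := by
  obtain ⟨hlen, hdy⟩ := (mem_dyckFinset w n).mp hw
  show (w.map toStep).count DyckStep.U = n
  rw [count_map_toStep_U]
  have htot := count_true_add_count_false w
  have hcnt := hdy.1
  omega

def dwToList (p : DyckWord) : List Bool := p.toList.map fromStep

lemma dwToList_mem (p : DyckWord) (n : ℕ) (hp : p.semilength = n) :
    dwToList p ∈ dyckFinset n := by
  rw [mem_dyckFinset]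
  have hlen2 : 2 * p.semilength = p.toList.length := p.two_mul_semilength_eq_length
  refine ⟨by rw [dwToList, List.length_map]; omega, ?_, ?_⟩
  · rw [dwToList, count_map_fromStep_true, count_map_fromStep_false]
    exact p.count_U_eq_count_D
  · intro j
    unfold hgt dwToList
    rw [← List.map_take, count_map_fromStep_true, count_map_fromStep_false]
    have := p.count_D_le_count_U j
    omega

lemma card_dyckFinset (n : ℕ) : (dyckFinset n).card = catalan n := by
  rw [← DyckWord.card_dyckWord_semilength_eq_catalan n, ← Fintype.card_coe]
  apply Fintype.card_congr
  exact
    { toFun := fun x => ⟨listToDW x.1 n x.2, listToDW_semilength x.1 n x.2⟩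
      invFun := fun y => ⟨dwToList y.1, dwToList_mem y.1 n y.2⟩
      left_inv := fun x => Subtype.ext (by
        show (x.1.map toStep).map fromStep = x.1
        rw [List.map_map]
        have h : (fromStep ∘ toStep) = id := funext fromStep_toStep
        rw [h, List.map_id])
      right_inv := fun y => Subtype.ext (DyckWord.ext (by
        show (y.1.toList.map fromStep).map toStep = y.1.toList
        rw [List.map_map]
        have h : (toStep ∘ fromStep) = id := funext toStep_fromStep
        rw [h, List.map_id])) }

/-! ### Power series -/

open PowerSeries

noncomputable def catPS : ℚ⟦X⟧ := PowerSeries.mk fun n => (catalan n : ℚ)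

noncomputable def tPS : ℚ⟦X⟧ := PowerSeries.mk fun n => ((PKset n).card : ℚ)

lemma catPS_eq : catPS = 1 + X * catPS^2 := by
  ext n
  rw [map_add, coeff_one]
  cases n with
  | zero =>
      rw [if_pos rfl, catPS, coeff_mk]
      norm_num
  | succ m =>
      rw [if_neg (Nat.succ_ne_zero m), coeff_succ_X_mul, sq, coeff_mul, catPS, coeff_mk,
        catalan_succ']
      push_cast
      rw [zero_add]
      exact Finset.sum_congr rfl (fun p _ => by rw [coeff_mk, coeff_mk])

lemma catPS_const : constantCoeff catPS = 1 := by
  simp [catPS, catalan_zero]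

lemma ps_XC2 : X * catPS^2 = catPS - 1 := by linear_combination -catPS_eq

lemma ps_R_eq (R : ℚ⟦X⟧) (hR : R^2 = 1 - 4*X) (hR0 : constantCoeff R = 1) :
    R = 1 - 2*X*catPS := by
  have h1 : (1 - 2*X*catPS)^2 = 1 - 4*X := by linear_combination (4*X) * ps_XC2
  have h2 : (R - (1 - 2*X*catPS)) * (R + (1 - 2*X*catPS)) = 0 := by
    linear_combination hR - h1
  rcases mul_eq_zero.mp h2 with h | h
  · linear_combination h
  · exfalso
    have h3 := congrArg constantCoeff h
    simp [hR0, catPS_const] at h3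

lemma ps_DC : (d⁄dX ℚ) catPS * (1 - 2*X*catPS) = catPS^2 := by
  have hC2 : catPS = 1 + X*(catPS*catPS) := by linear_combination catPS_eq
  have h := congrArg (d⁄dX ℚ) hC2
  rw [map_add, Derivation.map_one_eq_zero, zero_add, Derivation.leibniz, Derivation.leibniz,
    PowerSeries.derivative_X] at h
  simp only [smul_eq_mul, mul_one] at h
  linear_combination h

lemma ps_T_eq : tPS = 2*X^2*((d⁄dX ℚ) catPS) + X*catPS := by
  have hx : 2*X^2*((d⁄dX ℚ) catPS) = X*(X*((d⁄dX ℚ) catPS + (d⁄dX ℚ) catPS)) := by ring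
  rw [hx]
  ext n
  rw [map_add, tPS, coeff_mk]
  cases n with
  | zero =>
      rw [PKset_zero]
      simp [map_mul, constantCoeff_X]
  | succ m =>
      rw [coeff_succ_X_mul, coeff_succ_X_mul, PKset_card_succ, card_dyckFinset]
      cases m with
      | zero =>
          simp [map_mul, constantCoeff_X, catPS_const, catalan_zero]
      | succ k =>
          rw [coeff_succ_X_mul, map_add, coeff_derivative, catPS, coeff_mk]
          push_cast
          ring

lemma ps_A_eq : (1 - X) * (PowerSeries.mk fun n => ((∑ w ∈ dyckFinset n, spCount w : ℕ) : ℚ))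
    = X * (tPS + catPS) := by
  ext n
  rw [sub_mul, one_mul, map_sub]
  cases n with
  | zero =>
      have h0 : (∑ w ∈ dyckFinset 0, spCount w) = 0 := by rw [sum_spCount]; exact SPset_zero
      rw [coeff_mk, h0]
      simp [map_mul, constantCoeff_X]
  | succ m =>
      rw [coeff_succ_X_mul, coeff_succ_X_mul, map_add, coeff_mk, coeff_mk, tPS, coeff_mk,
        catPS, coeff_mk]
      have hrec : (∑ w ∈ dyckFinset (m+1), spCount w)
          = (∑ w ∈ dyckFinset m, spCount w) + ((PKset m).card + catalan m) := by
        rw [sum_spCount, sum_spCount, SPset_card_succ, MKset_card, card_dyckFinset]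
      rw [hrec]
      push_cast
      ring
open PowerSeries in
/-- The generating function for the total number of symmetric
peaks over all Dyck paths of semilength `n` is
`(5z − 1 + (1−z)√(1−4z)) / (2(1−z)√(1−4z))`, where `√(1−4z)` is the formal
power series `R` with `R² = 1 − 4z` and constant term `1`. -/
theorem total_symmetric_peaks_gf (R : PowerSeries ℚ)
    (hR : R ^ 2 = 1 - 4 * X) (hR0 : constantCoeff R = 1) :
    2 * (1 - X) * R * (mk fun n => ((∑ w ∈ dyckFinset n, spCount w : ℕ) : ℚ)) =
      5 * X - 1 + (1 - X) * R := by
  rw [ps_R_eq R hR hR0]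
  linear_combination (2*(1-2*X*catPS)) * ps_A_eq + (2*X*(1-2*X*catPS)) * ps_T_eq
    + (4*X^3) * ps_DC + (-(4:ℚ⟦X⟧)*X) * ps_XC2
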